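/- arXiv:1302.2400 — 5 statements merged into one kernel-verified Lean document; each statement's English description precedes it below -/
import Mathlib

section
/- Let U be a normed space, let β, ν ∈ (0,1) and C > 0, and let ω : ℝ → U be continuous with ‖ω‖_{β,0,n} < ∞ for every n ∈ ℕ. Define the sequence of times T_0(ω) = 0 and, for i ≥ 1, T_i(ω) = T_{i−1}(ω) + T(θ_{T_{i−1}(ω)} ω). Then for every t > 0 there exists i ∈ ℕ such that T_i(ω) ≥ t. -/
/-- The `β`-Hölder seminorm of `ω : ℝ → U` on the interval `[a,b]`:
`sSup { ‖ω t − ω s‖ / (t−s)^β : a ≤ s < t ≤ b }`. -/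
noncomputable def holderNorm {U : Type*} [NormedAddCommGroup U] (β a b : ℝ) (ω : ℝ → U) : ℝ :=
  sSup {x : ℝ | ∃ s t : ℝ, a ≤ s ∧ s < t ∧ t ≤ b ∧ x = ‖ω t - ω s‖ / (t - s) ^ β}

/-- The Wiener shift `(θ_τ ω)(s) = ω(s+τ) − ω(τ)`. -/
def wienerShift {U : Type*} [NormedAddCommGroup U] (τ : ℝ) (ω : ℝ → U) : ℝ → U :=
  fun s => ω (s + τ) - ω τ

/-- `T(ω) = inf { T > 0 : C T + C (T^β + T^{1+β} + T^{β+ν}) ‖ω‖_{β,0,T} ≥ 1/2 }`. -/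
noncomputable def TTime {U : Type*} [NormedAddCommGroup U] (C β ν : ℝ) (ω : ℝ → U) : ℝ :=
  sInf {T : ℝ | 0 < T ∧
    1 / 2 ≤ C * T + C * (T ^ β + T ^ (1 + β) + T ^ (β + ν)) * holderNorm β 0 T ω}

/-- With `T_0(ω) = 0` and `T_i(ω) = T_{i−1}(ω) + T(θ_{T_{i−1}(ω)} ω)`, for every `t > 0`
there is `i ∈ ℕ` with `T_i(ω) ≥ t`. -/
theorem stopping_times_tend_to_infinity
    {U : Type*} [NormedAddCommGroup U] [NormedSpace ℝ U]
    (β ν C : ℝ) (hβ : β ∈ Set.Ioo (0 : ℝ) 1) (hν : ν ∈ Set.Ioo (0 : ℝ) 1) (hC : 0 < C)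
    (ω : ℝ → U) (hcont : Continuous ω)
    (hfin : ∀ n : ℕ,
      BddAbove {x : ℝ | ∃ s t : ℝ, 0 ≤ s ∧ s < t ∧ t ≤ (n : ℝ) ∧
        x = ‖ω t - ω s‖ / (t - s) ^ β})
    (Tseq : ℕ → ℝ) (h0 : Tseq 0 = 0)
    (hrec : ∀ i : ℕ, Tseq (i + 1) = Tseq i + TTime C β ν (wienerShift (Tseq i) ω)) :
    ∀ t : ℝ, 0 < t → ∃ i : ℕ, t ≤ Tseq i := by
  intro t ht
  by_contra hcon
  push_neg at hcon
  obtain ⟨hβ0, hβ1⟩ := hβ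
  obtain ⟨hν0, hν1⟩ := hν
  -- holderNorm is always nonnegative
  have hHnn : ∀ (a b : ℝ) (ω' : ℝ → U), 0 ≤ holderNorm β a b ω' := by
    intro a b ω'
    apply Real.sSup_nonneg
    rintro x ⟨s, u, hs, hsu, hu, rfl⟩
    have : (0:ℝ) ≤ (u - s) ^ β := Real.rpow_nonneg (by linarith) β
    positivity
  -- Tseq is nonnegative
  have hTnn : ∀ i, 0 ≤ Tseq i := by
    intro i
    induction i with
    | zero => simp [h0]
    | succ i ih =>
      have h1 : 0 ≤ TTime C β ν (wienerShift (Tseq i) ω) :=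
        Real.sInf_nonneg (fun x hx => hx.1.le)
      rw [hrec]; linarith
  obtain ⟨n, hn⟩ := exists_nat_ge (t + 1)
  obtain ⟨B, hB⟩ := hfin n
  set B' := max B 0 with hB'def
  have hB'0 : (0:ℝ) ≤ B' := le_max_right _ _
  -- the comparison function and its continuity at 0
  set f : ℝ → ℝ := fun x => C * x + C * (x ^ β + x ^ (1 + β) + x ^ (β + ν)) * B' with hfdef
  have hf0 : f 0 = 0 := by
    simp [hfdef, Real.zero_rpow (by linarith : β ≠ 0),
      Real.zero_rpow (by linarith : 1 + β ≠ 0), Real.zero_rpow (by linarith : β + ν ≠ 0)]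
  have hfc : ContinuousAt f 0 := by
    apply ContinuousAt.add
    · exact (continuous_const.mul continuous_id).continuousAt
    · apply ContinuousAt.mul _ continuousAt_const
      apply ContinuousAt.mul continuousAt_const
      exact ((Real.continuousAt_rpow_const 0 β (Or.inr hβ0.le)).add
        (Real.continuousAt_rpow_const 0 (1 + β) (Or.inr (by linarith)))).add
        (Real.continuousAt_rpow_const 0 (β + ν) (Or.inr (by linarith)))
  obtain ⟨δ, hδ0, hδ⟩ := Metric.continuousAt_iff.mp hfc (1/2) (by norm_num)
  set ε := min δ 1 with hεdef
  have hε0 : 0 < ε := lt_min hδ0 one_pos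
  -- key: uniform lower bound on the waiting times
  have key : ∀ i, ε ≤ TTime C β ν (wienerShift (Tseq i) ω) := by
    intro i
    set τ := Tseq i with hτdef
    have hτ0 : 0 ≤ τ := hTnn i
    have hτt : τ < t := hcon i
    apply le_csInf
    · -- the defining set is nonempty
      refine ⟨max (1 / (2 * C)) 1, ⟨lt_of_lt_of_le one_pos (le_max_right _ _), ?_⟩⟩
      have h1 : 1 / (2 * C) ≤ max (1 / (2 * C)) 1 := le_max_left _ _
      have h2 : C * (1 / (2 * C)) = 1 / 2 := by field_simp
      have hT0 : (0:ℝ) ≤ max (1 / (2 * C)) 1 := le_trans zero_le_one (le_max_right _ _)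
      have h3 : 1 / 2 ≤ C * max (1 / (2 * C)) 1 := by nlinarith
      have h4 : 0 ≤ C * ((max (1 / (2 * C)) 1) ^ β + (max (1 / (2 * C)) 1) ^ (1 + β) +
          (max (1 / (2 * C)) 1) ^ (β + ν)) *
          holderNorm β 0 (max (1 / (2 * C)) 1) (wienerShift τ ω) := by
        have e1 : (0:ℝ) ≤ (max (1 / (2 * C)) 1) ^ β := Real.rpow_nonneg hT0 _
        have e2 : (0:ℝ) ≤ (max (1 / (2 * C)) 1) ^ (1 + β) := Real.rpow_nonneg hT0 _
        have e3 : (0:ℝ) ≤ (max (1 / (2 * C)) 1) ^ (β + ν) := Real.rpow_nonneg hT0 _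
        have e4 := hHnn 0 (max (1 / (2 * C)) 1) (wienerShift τ ω)
        positivity
      linarith
    · rintro T ⟨hT0, hTcond⟩
      by_contra hlt
      push_neg at hlt
      have hTδ : T < δ := lt_of_lt_of_le hlt (min_le_left _ _)
      have hT1 : T ≤ 1 := le_of_lt (lt_of_lt_of_le hlt (min_le_right _ _))
      -- bound the Hölder norm of the shifted path
      have hHle : holderNorm β 0 T (wienerShift τ ω) ≤ B' := by
        apply csSup_le
        · exact ⟨‖wienerShift τ ω T - wienerShift τ ω 0‖ / (T - 0) ^ β,
            0, T, le_refl 0, hT0, le_refl T, rfl⟩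
        · rintro x ⟨s, u, hs, hsu, hu, rfl⟩
          have hmem : ‖wienerShift τ ω u - wienerShift τ ω s‖ / (u - s) ^ β ∈
              {x : ℝ | ∃ s t : ℝ, 0 ≤ s ∧ s < t ∧ t ≤ (n : ℝ) ∧
                x = ‖ω t - ω s‖ / (t - s) ^ β} := by
            refine ⟨s + τ, u + τ, by linarith, by linarith, by linarith, ?_⟩
            simp only [wienerShift]
            congr 2
            · abel
            · ring
          exact le_trans (hB hmem) (le_max_left _ _)
      have hfT : |f T - f 0| < 1 / 2 := by
        have : dist T 0 < δ := by
          rw [Real.dist_eq, sub_zero, abs_of_pos hT0]; exact hTδ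
        simpa [Real.dist_eq] using hδ this
      rw [hf0, sub_zero, abs_lt] at hfT
      have hpow : (0:ℝ) ≤ T ^ β + T ^ (1 + β) + T ^ (β + ν) := by
        have e1 : (0:ℝ) ≤ T ^ β := Real.rpow_nonneg hT0.le _
        have e2 : (0:ℝ) ≤ T ^ (1 + β) := Real.rpow_nonneg hT0.le _
        have e3 : (0:ℝ) ≤ T ^ (β + ν) := Real.rpow_nonneg hT0.le _
        linarith
      have hle : C * T + C * (T ^ β + T ^ (1 + β) + T ^ (β + ν)) *
          holderNorm β 0 T (wienerShift τ ω) ≤ f T := by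
        have : C * (T ^ β + T ^ (1 + β) + T ^ (β + ν)) *
            holderNorm β 0 T (wienerShift τ ω) ≤
            C * (T ^ β + T ^ (1 + β) + T ^ (β + ν)) * B' := by
          apply mul_le_mul_of_nonneg_left hHle (by positivity)
        simp only [hfdef]; linarith
      exact absurd (lt_of_le_of_lt (le_trans hTcond hle) hfT.2) (lt_irrefl _)
  -- conclude: Tseq i ≥ i * ε, contradiction with boundedness
  have hgrow : ∀ i : ℕ, (i : ℝ) * ε ≤ Tseq i := by
    intro i
    induction i with
    | zero => simp [h0]
    | succ i ih =>
      rw [hrec]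
      push_cast
      have := key i
      linarith
  obtain ⟨i, hi⟩ := exists_nat_ge (t / ε)
  have : t ≤ (i : ℝ) * ε := by
    rw [div_le_iff₀ hε0] at hi; linarith
  have := hgrow i
  have := hcon i
  linarith
end

section
/- Let U be a normed space, β, ν ∈ (0,1), C > 0, and let ω : ℝ → U be continuous with ‖ω‖_{β,0,n} < ∞ for every n ∈ ℕ. Fix t > 0, set k := ‖ω‖_{β,0,t}, and let s* > 0 be the unique solution of C s + C (s^β + s^{1+β} + s^{β+ν}) k = 1/2. Then T(ω) ≥ min(s*, t). -/
/-- If `k = ‖ω‖_{β,0,t}` and `s* > 0` solves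
`C s + C (s^β + s^{1+β} + s^{β+ν}) k = 1/2`, then `T(ω) ≥ min(s*, t)`. -/
theorem TTime_ge_min
    {U : Type*} [NormedAddCommGroup U] [NormedSpace ℝ U]
    (β ν C : ℝ) (hβ : β ∈ Set.Ioo (0 : ℝ) 1) (hν : ν ∈ Set.Ioo (0 : ℝ) 1) (hC : 0 < C)
    (ω : ℝ → U) (hcont : Continuous ω)
    (hfin : ∀ n : ℕ,
      BddAbove {x : ℝ | ∃ s t : ℝ, 0 ≤ s ∧ s < t ∧ t ≤ (n : ℝ) ∧
        x = ‖ω t - ω s‖ / (t - s) ^ β})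
    (t : ℝ) (ht : 0 < t) (s : ℝ) (hs : 0 < s)
    (heq : C * s + C * (s ^ β + s ^ (1 + β) + s ^ (β + ν)) * holderNorm β 0 t ω = 1 / 2) :
    min s t ≤ TTime C β ν ω := by
  obtain ⟨hβ0, hβ1⟩ := hβ
  obtain ⟨hν0, hν1⟩ := hν
  have hnonneg : ∀ b : ℝ, 0 ≤ holderNorm β 0 b ω := by
    intro b
    apply Real.sSup_nonneg
    rintro x ⟨u, v, hu, huv, hvb, rfl⟩
    have : (0:ℝ) < (v - u) ^ β := Real.rpow_pos_of_pos (by linarith) β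
    positivity
  have hmono : ∀ a b : ℝ, 0 < a → a ≤ b → holderNorm β 0 a ω ≤ holderNorm β 0 b ω := by
    intro a b ha hab
    apply csSup_le_csSup
    · refine (hfin ⌈b⌉₊).mono ?_
      rintro x ⟨u, v, hu, huv, hvb, rfl⟩
      exact ⟨u, v, hu, huv, hvb.trans (Nat.le_ceil b), rfl⟩
    · exact ⟨‖ω a - ω 0‖ / (a - 0) ^ β, 0, a, le_refl 0, ha, le_refl a, rfl⟩
    · rintro x ⟨u, v, hu, huv, hvb, rfl⟩
      exact ⟨u, v, hu, huv, hvb.trans hab, rfl⟩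
  set k := holderNorm β 0 t ω with hk
  have hk0 : 0 ≤ k := hnonneg t
  apply le_csInf
  · set T0 : ℝ := max 1 (1 / (2 * C)) with hT0def
    have hT0 : (0:ℝ) < T0 := lt_of_lt_of_le one_pos (le_max_left _ _)
    refine ⟨T0, hT0, ?_⟩
    have h1 : 1 / 2 ≤ C * T0 := by
      have h2 : 1 / (2 * C) ≤ T0 := le_max_right _ _
      calc 1/2 = C * (1 / (2 * C)) := by field_simp
        _ ≤ C * T0 := by nlinarith
    have p1 : (0:ℝ) ≤ T0 ^ β := Real.rpow_nonneg hT0.le β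
    have p2 : (0:ℝ) ≤ T0 ^ (1 + β) := Real.rpow_nonneg hT0.le _
    have p3 : (0:ℝ) ≤ T0 ^ (β + ν) := Real.rpow_nonneg hT0.le _
    have h3 : 0 ≤ C * (T0 ^ β + T0 ^ (1 + β) + T0 ^ (β + ν)) * holderNorm β 0 T0 ω :=
      mul_nonneg (mul_nonneg hC.le (by linarith)) (hnonneg T0)
    linarith
  · rintro T ⟨hT, hineq⟩
    by_contra h
    push_neg at h
    have hTs : T < s := h.trans_le (min_le_left _ _)
    have hTt : T < t := h.trans_le (min_le_right _ _)
    have hNT : holderNorm β 0 T ω ≤ k := hmono T t hT hTt.le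
    have hNT0 : 0 ≤ holderNorm β 0 T ω := hnonneg T
    have q1 : T ^ β ≤ s ^ β := Real.rpow_le_rpow hT.le hTs.le hβ0.le
    have q2 : T ^ (1 + β) ≤ s ^ (1 + β) := Real.rpow_le_rpow hT.le hTs.le (by linarith)
    have q3 : T ^ (β + ν) ≤ s ^ (β + ν) := Real.rpow_le_rpow hT.le hTs.le (by linarith)
    have p1 : (0:ℝ) ≤ T ^ β := Real.rpow_nonneg hT.le β
    have p2 : (0:ℝ) ≤ T ^ (1 + β) := Real.rpow_nonneg hT.le _
    have p3 : (0:ℝ) ≤ T ^ (β + ν) := Real.rpow_nonneg hT.le _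
    have key : C * (T ^ β + T ^ (1 + β) + T ^ (β + ν)) * holderNorm β 0 T ω ≤
        C * (s ^ β + s ^ (1 + β) + s ^ (β + ν)) * k := by
      have h1 : C * (T ^ β + T ^ (1 + β) + T ^ (β + ν)) ≤
          C * (s ^ β + s ^ (1 + β) + s ^ (β + ν)) :=
        mul_le_mul_of_nonneg_left (by linarith) hC.le
      exact mul_le_mul h1 hNT hNT0 (mul_nonneg hC.le (by linarith))
    have hCT : C * T < C * s := by nlinarith
    linarith
end

section
/- Let U be a normed space, μ > 0, and let ω : ℝ → U be a function with ω(0) = 0. Then for every n ∈ ℕ, sup_{s ∈ [−μ,0]} ‖ω(−nμ + s)‖ ≤ 3 ∑_{i=0}^{n} sup_{s ∈ [−μ,0]} ‖(θ_{−iμ} ω)(s)‖ + sup_{s ∈ [−μ,0]} ‖ω(s)‖. -/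
open scoped ENNReal

/-- For every `n ∈ ℕ`,
`sup_{s∈[−μ,0]} ‖ω(−nμ+s)‖ ≤ 3 ∑_{i=0}^{n} sup_{s∈[−μ,0]} ‖(θ_{−iμ}ω)(s)‖ + sup_{s∈[−μ,0]} ‖ω(s)‖`. -/
theorem sup_shift_estimate
    {U : Type*} [NormedAddCommGroup U] [NormedSpace ℝ U]
    (μ : ℝ) (hμ : 0 < μ) (ω : ℝ → U) (h0 : ω 0 = 0) (n : ℕ) :
    (⨆ s ∈ Set.Icc (-μ) (0 : ℝ), (‖ω (-(n : ℝ) * μ + s)‖₊ : ℝ≥0∞)) ≤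
      3 * ∑ i ∈ Finset.range (n + 1),
            ⨆ s ∈ Set.Icc (-μ) (0 : ℝ), (‖wienerShift (-(i : ℝ) * μ) ω s‖₊ : ℝ≥0∞)
        + ⨆ s ∈ Set.Icc (-μ) (0 : ℝ), (‖ω s‖₊ : ℝ≥0∞) := by
  set S : ℕ → ℝ≥0∞ := fun i =>
    ⨆ s ∈ Set.Icc (-μ) (0 : ℝ), (‖wienerShift (-(i : ℝ) * μ) ω s‖₊ : ℝ≥0∞) with hS
  have hmem : (-μ) ∈ Set.Icc (-μ) (0 : ℝ) := ⟨le_refl _, by linarith⟩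
  have hbound : ∀ (i : ℕ) (s : ℝ), s ∈ Set.Icc (-μ) (0 : ℝ) →
      (‖wienerShift (-(i : ℝ) * μ) ω s‖₊ : ℝ≥0∞) ≤ S i := by
    intro i s hs
    exact le_iSup₂ (f := fun s (_ : s ∈ Set.Icc (-μ) (0:ℝ)) =>
      (‖wienerShift (-(i : ℝ) * μ) ω s‖₊ : ℝ≥0∞)) s hs
  have htel : ω (-(n : ℝ) * μ) = ∑ k ∈ Finset.range n, wienerShift (-(k : ℝ) * μ) ω (-μ) := by
    have hterm : ∀ k : ℕ, wienerShift (-(k : ℝ) * μ) ω (-μ)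
        = ω (-((k + 1 : ℕ) : ℝ) * μ) - ω (-(k : ℝ) * μ) := by
      intro k
      have h1 : -μ + -(k : ℝ) * μ = -((k + 1 : ℕ) : ℝ) * μ := by push_cast; ring
      show ω (-μ + -(k : ℝ) * μ) - ω (-(k : ℝ) * μ) = _
      rw [h1]
    have h := Finset.sum_range_sub (fun k : ℕ => ω (-(k : ℝ) * μ)) n
    simp only [Nat.cast_zero, neg_zero, zero_mul, h0, sub_zero] at h
    rw [← h]
    exact Finset.sum_congr rfl fun k _ => (hterm k).symm
  have key : (⨆ s ∈ Set.Icc (-μ) (0 : ℝ), (‖ω (-(n : ℝ) * μ + s)‖₊ : ℝ≥0∞))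
      ≤ ∑ i ∈ Finset.range (n + 1), S i := by
    apply iSup₂_le
    intro s hs
    have hdecomp : ω (-(n : ℝ) * μ + s) = wienerShift (-(n : ℝ) * μ) ω s + ω (-(n : ℝ) * μ) := by
      simp [wienerShift, add_comm]
    calc (‖ω (-(n : ℝ) * μ + s)‖₊ : ℝ≥0∞)
        ≤ (‖wienerShift (-(n : ℝ) * μ) ω s‖₊ : ℝ≥0∞) + (‖ω (-(n : ℝ) * μ)‖₊ : ℝ≥0∞) := by
          rw [hdecomp]
          exact_mod_cast nnnorm_add_le _ _
      _ ≤ S n + ∑ k ∈ Finset.range n, S k := by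
          gcongr
          · exact hbound n s hs
          · rw [htel]
            calc (‖∑ k ∈ Finset.range n, wienerShift (-(k : ℝ) * μ) ω (-μ)‖₊ : ℝ≥0∞)
                ≤ ∑ k ∈ Finset.range n, (‖wienerShift (-(k : ℝ) * μ) ω (-μ)‖₊ : ℝ≥0∞) := by
                  exact_mod_cast nnnorm_sum_le _ _
              _ ≤ ∑ k ∈ Finset.range n, S k :=
                  Finset.sum_le_sum fun k _ => hbound k (-μ) hmem
      _ = ∑ i ∈ Finset.range (n + 1), S i := by
          rw [Finset.sum_range_succ, add_comm]
  simp only [hS] at key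
  refine key.trans (le_trans ?_ (le_mul_of_one_le_left zero_le
    (by norm_num : (1 : ℝ≥0∞) ≤ 3)))
  refine Finset.sum_le_sum fun i _ => ?_
  exact iSup₂_mono fun s hs => le_self_add
end

section
/- Let U be a normed space, μ > 0, and let ω : ℝ → U be continuous with ω(0) = 0. Assume that for every ε > 0 there exists C₀ ≥ 0 such that sup_{s ∈ [−μ,0]} ‖(θ_{−iμ} ω)(s)‖ ≤ C₀ + ε i for all i ∈ ℕ. Then for every κ > 0, lim_{r → ∞} e^{−κ r} · sup_{s ∈ [−μ,0]} ‖ω(−r + s)‖ = 0; that is, r ↦ ‖ω_{−r}‖_μ grows subexponentially. -/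
open Filter

/-- If `sup_{s∈[−μ,0]} ‖(θ_{−iμ}ω)(s)‖` grows sublinearly in `i`, then
`r ↦ sup_{s∈[−μ,0]} ‖ω(−r+s)‖` grows subexponentially, i.e.
`e^{−κ r} sup_{s∈[−μ,0]} ‖ω(−r+s)‖ → 0` as `r → ∞`, for every `κ > 0`. -/
theorem subexponential_growth_of_sublinear_shifts
    {U : Type*} [NormedAddCommGroup U] [NormedSpace ℝ U]
    (μ : ℝ) (hμ : 0 < μ) (ω : ℝ → U) (hcont : Continuous ω) (h0 : ω 0 = 0)
    (hsub : ∀ ε > (0 : ℝ), ∃ C₀ ≥ (0 : ℝ), ∀ i : ℕ,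
      sSup ((fun s => ‖wienerShift (-(i : ℝ) * μ) ω s‖) '' Set.Icc (-μ) 0) ≤ C₀ + ε * i) :
    ∀ κ > (0 : ℝ),
      Tendsto (fun r : ℝ =>
          Real.exp (-κ * r) * sSup ((fun s => ‖ω (-r + s)‖) '' Set.Icc (-μ) 0))
        atTop (nhds 0) := by
  intro κ hκ
  obtain ⟨C₀, hC₀, hC⟩ := hsub 1 one_pos
  simp only [one_mul] at hC
  have hIcc : (Set.Icc (-μ) 0).Nonempty := Set.nonempty_Icc.2 (by linarith)
  -- pointwise bound on the shift
  have hA : ∀ (j : ℕ), ∀ s ∈ Set.Icc (-μ) 0,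
      ‖ω (s + -(j : ℝ) * μ)‖ ≤ (C₀ + j) + ‖ω (-(j : ℝ) * μ)‖ := by
    intro j s hs
    have hb : BddAbove ((fun s => ‖wienerShift (-(j : ℝ) * μ) ω s‖) '' Set.Icc (-μ) 0) := by
      apply IsCompact.bddAbove
      apply isCompact_Icc.image
      unfold wienerShift
      fun_prop
    have h1 : ‖wienerShift (-(j : ℝ) * μ) ω s‖ ≤ C₀ + j :=
      le_trans (le_csSup hb (Set.mem_image_of_mem _ hs)) (hC j)
    have : ω (s + -(j : ℝ) * μ) = wienerShift (-(j : ℝ) * μ) ω s + ω (-(j : ℝ) * μ) := by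
      simp [wienerShift]
    rw [this]
    exact le_trans (norm_add_le _ _) (by linarith)
  -- bound at multiples of μ
  have hB : ∀ j : ℕ, ‖ω (-(j : ℝ) * μ)‖ ≤ j * C₀ + (j : ℝ) ^ 2 := by
    intro j
    induction j with
    | zero => simp [h0]
    | succ j ih =>
      have hs : (-μ : ℝ) ∈ Set.Icc (-μ) 0 := ⟨le_refl _, by linarith⟩
      have := hA j (-μ) hs
      have heq : (-μ : ℝ) + -(j : ℝ) * μ = -((j : ℕ) + 1 : ℝ) * μ := by ring
      rw [heq] at this
      have hcast : (-(((j + 1 : ℕ)) : ℝ)) * μ = -((j : ℕ) + 1 : ℝ) * μ := by push_cast; ring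
      rw [hcast]
      push_cast
      nlinarith [this, ih, hC₀]
  -- main pointwise bound
  have hMain : ∀ r : ℝ, 0 ≤ r → ∀ s ∈ Set.Icc (-μ) 0,
      ‖ω (-r + s)‖ ≤ C₀ + (r / μ + 1) + (r / μ + 1) * C₀ + (r / μ + 1) ^ 2 := by
    intro r hr s hs
    set t : ℝ := r / μ + 1 with ht
    have htμ : 0 ≤ r / μ := div_nonneg hr hμ.le
    set j : ℕ := ⌊r / μ⌋₊ with hj
    have hj1 : (j : ℝ) ≤ r / μ := Nat.floor_le htμ
    have hj2 : r / μ < (j : ℝ) + 1 := Nat.lt_floor_add_one _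
    have hjr : (j : ℝ) * μ ≤ r := (le_div_iff₀ hμ).1 hj1
    have hjr' : r < ((j : ℝ) + 1) * μ := by
      have := (div_lt_iff₀ hμ).1 hj2; linarith
    -- general step: for k with -(k+1)μ ≤ -r+s ≤ -kμ and k ≤ t, conclude
    have key : ∀ k : ℕ, (k : ℝ) ≤ t → -((k : ℝ) + 1) * μ ≤ -r + s → -r + s ≤ -(k : ℝ) * μ →
        ‖ω (-r + s)‖ ≤ C₀ + t + t * C₀ + t ^ 2 := by
      intro k hk hlow hhigh
      set s' : ℝ := (-r + s) + (k : ℝ) * μ with hs'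
      have hs'mem : s' ∈ Set.Icc (-μ) 0 := by
        constructor
        · simp only [hs']; nlinarith
        · simp only [hs']; nlinarith
      have := hA k s' hs'mem
      have heq : s' + -(k : ℝ) * μ = -r + s := by ring
      rw [heq] at this
      have hBk := hB k
      have hk0 : (0 : ℝ) ≤ k := Nat.cast_nonneg k
      nlinarith [this, hBk, hC₀, hk]
    rcases le_or_gt (-(((j : ℝ) + 1) * μ)) (-r + s) with h1 | h1
    · exact key j (by simp only [ht]; linarith) (by linarith) (by nlinarith [hs.2])
    · have hk : ((j + 1 : ℕ) : ℝ) ≤ t := by push_cast; simp only [ht]; linarith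
      refine key (j + 1) hk ?_ ?_
      · push_cast; nlinarith [hs.1]
      · push_cast; linarith
  -- sup bound
  have hSup : ∀ r : ℝ, 0 ≤ r →
      sSup ((fun s => ‖ω (-r + s)‖) '' Set.Icc (-μ) 0) ≤
        C₀ + (r / μ + 1) + (r / μ + 1) * C₀ + (r / μ + 1) ^ 2 := by
    intro r hr
    apply Real.sSup_le
    · rintro x ⟨s, hs, rfl⟩
      exact hMain r hr s hs
    · nlinarith [div_nonneg hr hμ.le, sq_nonneg (r / μ + 1), hC₀]
  have hSupNonneg : ∀ r : ℝ, 0 ≤ sSup ((fun s => ‖ω (-r + s)‖) '' Set.Icc (-μ) 0) := by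
    intro r
    have hb : BddAbove ((fun s => ‖ω (-r + s)‖) '' Set.Icc (-μ) 0) :=
      (isCompact_Icc.image (by fun_prop)).bddAbove
    have h0' : (0 : ℝ) ∈ Set.Icc (-μ) 0 := ⟨by linarith, le_refl _⟩
    exact le_trans (norm_nonneg _) (le_csSup hb (Set.mem_image_of_mem _ h0'))
  -- the dominating function tends to 0
  have hDom : Tendsto (fun r : ℝ =>
      Real.exp (-κ * r) * (C₀ + (r / μ + 1) + (r / μ + 1) * C₀ + (r / μ + 1) ^ 2))
      atTop (nhds 0) := by
    have e0 : Tendsto (fun r : ℝ => Real.exp (-κ * r)) atTop (nhds 0) :=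
      Real.tendsto_exp_atBot.comp (Tendsto.const_mul_atTop_of_neg (neg_neg_of_pos hκ) tendsto_id)
    have e1 : Tendsto (fun r : ℝ => r * Real.exp (-κ * r)) atTop (nhds 0) := by
      have := tendsto_rpow_mul_exp_neg_mul_atTop_nhds_zero 1 κ hκ
      apply this.congr'
      filter_upwards [eventually_ge_atTop (0 : ℝ)] with r hr
      rw [Real.rpow_one]
    have e2 : Tendsto (fun r : ℝ => r ^ 2 * Real.exp (-κ * r)) atTop (nhds 0) := by
      have := tendsto_rpow_mul_exp_neg_mul_atTop_nhds_zero 2 κ hκ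
      apply this.congr'
      filter_upwards [eventually_ge_atTop (0 : ℝ)] with r hr
      rw [Real.rpow_two]
    have heq : (fun r : ℝ =>
        Real.exp (-κ * r) * (C₀ + (r / μ + 1) + (r / μ + 1) * C₀ + (r / μ + 1) ^ 2)) =
        fun r : ℝ => (2 * C₀ + 2) * Real.exp (-κ * r) + ((C₀ + 3) / μ) * (r * Real.exp (-κ * r))
          + (1 / μ ^ 2) * (r ^ 2 * Real.exp (-κ * r)) := by
      funext r
      field_simp
      ring
    rw [heq]
    have := ((e0.const_mul (2 * C₀ + 2)).add (e1.const_mul ((C₀ + 3) / μ))).add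
      (e2.const_mul (1 / μ ^ 2))
    simpa using this
  -- squeeze
  apply tendsto_of_tendsto_of_tendsto_of_le_of_le' tendsto_const_nhds hDom
  · filter_upwards with r
    exact mul_nonneg (Real.exp_pos _).le (hSupNonneg r)
  · filter_upwards [eventually_ge_atTop (0 : ℝ)] with r hr
    exact mul_le_mul_of_nonneg_left (hSup r hr) (Real.exp_pos _).le
end

section
/- Let λ > 0, ν ∈ (0,1), 0 < μ ≤ τ, and let g : [−μ,τ] → [0,∞) be continuous. Then sup_{s ∈ [−μ,0]} ∫_{0}^{τ+s} e^{−λ(τ+s−r)} (τ+s−r)^{ν−1} g(r) dr ≤ ∫_{0}^{τ} e^{−λ(τ−r)} (τ−r)^{ν−1} · ( sup_{σ ∈ [−μ,0]} g(r+σ) ) dr. -/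
open MeasureTheory intervalIntegral Set

private lemma kernel_integrable (lam ν τ : ℝ) (hν : 0 < ν)
    (φ : ℝ → ℝ) (hφ : Continuous φ) :
    IntervalIntegrable (fun x => Real.exp (-lam * (τ - x)) * (τ - x) ^ (ν - 1) * φ x)
      volume 0 τ := by
  have h1 : IntervalIntegrable (fun x : ℝ => (τ - x) ^ (ν - 1)) volume 0 τ := by
    have h := (intervalIntegral.intervalIntegrable_rpow' (a := 0) (b := τ)
      (r := ν - 1) (by linarith)).comp_sub_left τ
    simp only [sub_zero, sub_self] at h
    exact h.symm
  have h2 := h1.mul_continuousOn (g := fun x => Real.exp (-lam * (τ - x)) * φ x)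
    (((Real.continuous_exp.comp (by continuity)).mul hφ).continuousOn)
  have heq : (fun x => Real.exp (-lam * (τ - x)) * (τ - x) ^ (ν - 1) * φ x)
      = fun x => (τ - x) ^ (ν - 1) * (Real.exp (-lam * (τ - x)) * φ x) := by
    funext x; ring
  rw [heq]; exact h2

private lemma aux_main (lam ν μ τ : ℝ) (hlam : 0 < lam) (hν : ν ∈ Set.Ioo (0 : ℝ) 1)
    (hμ : 0 < μ) (hμτ : μ ≤ τ)
    (g : ℝ → ℝ) (hg : Continuous g) (hg0 : ∀ r, 0 ≤ g r) :
    sSup ((fun s => ∫ r in (0 : ℝ)..(τ + s),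
        Real.exp (-lam * (τ + s - r)) * (τ + s - r) ^ (ν - 1) * g r) '' Set.Icc (-μ) 0)
      ≤ ∫ r in (0 : ℝ)..τ,
          Real.exp (-lam * (τ - r)) * (τ - r) ^ (ν - 1) *
            sSup ((fun σ => g (r + σ)) '' Set.Icc (-μ) 0) := by
  have hτ : 0 < τ := hμ.trans_le hμτ
  set Gs : ℝ → ℝ := fun r => sSup ((fun σ => g (r + σ)) '' Set.Icc (-μ) 0) with hGsdef
  have hGsc : Continuous Gs := by
    apply IsCompact.continuous_sSup (f := fun r σ => g (r + σ)) isCompact_Icc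
    exact hg.comp (continuous_fst.add continuous_snd)
  have hbdd : ∀ x : ℝ, BddAbove ((fun σ => g (x + σ)) '' Set.Icc (-μ) 0) := fun x =>
    (isCompact_Icc.image (hg.comp (continuous_const.add continuous_id))).bddAbove
  have hGs0 : ∀ x, 0 ≤ Gs x := fun x =>
    (hg0 (x + 0)).trans (le_csSup (hbdd x) ⟨0, ⟨by linarith, le_refl 0⟩, rfl⟩)
  have hker : ∀ x : ℝ, x ≤ τ → 0 ≤ Real.exp (-lam * (τ - x)) * (τ - x) ^ (ν - 1) :=
    fun x hx => mul_nonneg (Real.exp_pos _).le (Real.rpow_nonneg (by linarith) _)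
  apply Real.sSup_le
  · rintro x ⟨s, ⟨hs1, hs2⟩, rfl⟩
    have hA := intervalIntegral.integral_comp_add_right (a := -s) (b := τ)
      (f := fun r => Real.exp (-lam * (τ + s - r)) * (τ + s - r) ^ (ν - 1) * g r) s
    simp only [neg_add_cancel, add_sub_add_right_eq_sub] at hA
    beta_reduce
    rw [← hA]
    calc (∫ x in (-s)..τ, Real.exp (-lam * (τ - x)) * (τ - x) ^ (ν - 1) * g (x + s))
        ≤ ∫ x in (0:ℝ)..τ, Real.exp (-lam * (τ - x)) * (τ - x) ^ (ν - 1) * g (x + s) := by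
          apply intervalIntegral.integral_mono_interval (by linarith) (by linarith) le_rfl
          · filter_upwards [ae_restrict_mem measurableSet_Ioc] with u hu
            exact mul_nonneg (hker u hu.2) (hg0 _)
          · exact kernel_integrable lam ν τ hν.1 _ (hg.comp (continuous_id.add continuous_const))
      _ ≤ ∫ x in (0:ℝ)..τ, Real.exp (-lam * (τ - x)) * (τ - x) ^ (ν - 1) * Gs x := by
          apply intervalIntegral.integral_mono_on (by linarith)
            (kernel_integrable lam ν τ hν.1 _ (hg.comp (continuous_id.add continuous_const)))
            (kernel_integrable lam ν τ hν.1 _ hGsc)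
          intro x hx
          exact mul_le_mul_of_nonneg_left (le_csSup (hbdd x) ⟨s, ⟨hs1, hs2⟩, rfl⟩)
            (hker x hx.2)
  · apply intervalIntegral.integral_nonneg (le_of_lt hτ)
    intro u hu
    exact mul_nonneg (hker u hu.2) (hGs0 u)

/-- For a nonnegative continuous `g` on `[−μ,τ]` and a singular exponential kernel,
`sup_{s∈[−μ,0]} ∫_0^{τ+s} e^{−λ(τ+s−r)} (τ+s−r)^{ν−1} g(r) dr
  ≤ ∫_0^τ e^{−λ(τ−r)} (τ−r)^{ν−1} sup_{σ∈[−μ,0]} g(r+σ) dr`. -/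
theorem sup_singular_kernel_integral_le
    (lam ν μ τ : ℝ) (hlam : 0 < lam) (hν : ν ∈ Set.Ioo (0 : ℝ) 1)
    (hμ : 0 < μ) (hμτ : μ ≤ τ)
    (g : ℝ → ℝ) (hg : ContinuousOn g (Set.Icc (-μ) τ))
    (hg0 : ∀ r ∈ Set.Icc (-μ) τ, 0 ≤ g r) :
    sSup ((fun s => ∫ r in (0 : ℝ)..(τ + s),
        Real.exp (-lam * (τ + s - r)) * (τ + s - r) ^ (ν - 1) * g r) '' Set.Icc (-μ) 0)
      ≤ ∫ r in (0 : ℝ)..τ,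
          Real.exp (-lam * (τ - r)) * (τ - r) ^ (ν - 1) *
            sSup ((fun σ => g (r + σ)) '' Set.Icc (-μ) 0) := by
  have hτ : 0 < τ := hμ.trans_le hμτ
  set p : ℝ → ℝ := fun x => max (-μ) (min τ x) with hp
  have hpmem : ∀ x, p x ∈ Set.Icc (-μ) τ := fun x =>
    ⟨le_max_left _ _, max_le (by linarith) (min_le_left _ _)⟩
  have hpfix : ∀ x ∈ Set.Icc (-μ) τ, p x = x := by
    rintro x ⟨h1, h2⟩
    simp only [hp, min_eq_right h2, max_eq_right h1]
  set G : ℝ → ℝ := fun x => g (p x) with hG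
  have hGc : Continuous G :=
    hg.comp_continuous (by fun_prop) hpmem
  have hG0 : ∀ x, 0 ≤ G x := fun x => hg0 _ (hpmem x)
  have hGeq : ∀ x ∈ Set.Icc (-μ) τ, G x = g x := fun x hx => by
    simp only [hG, hpfix x hx]
  have h1 : ((fun s => ∫ r in (0 : ℝ)..(τ + s),
      Real.exp (-lam * (τ + s - r)) * (τ + s - r) ^ (ν - 1) * g r) '' Set.Icc (-μ) 0)
      = ((fun s => ∫ r in (0 : ℝ)..(τ + s),
      Real.exp (-lam * (τ + s - r)) * (τ + s - r) ^ (ν - 1) * G r) '' Set.Icc (-μ) 0) := by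
    apply Set.image_congr
    rintro s ⟨hs1, hs2⟩
    apply intervalIntegral.integral_congr
    intro r hr
    rw [Set.uIcc_of_le (by linarith)] at hr
    beta_reduce
    rw [hGeq r ⟨by linarith [hr.1], by linarith [hr.2]⟩]
  have h2 : (∫ r in (0 : ℝ)..τ, Real.exp (-lam * (τ - r)) * (τ - r) ^ (ν - 1) *
        sSup ((fun σ => g (r + σ)) '' Set.Icc (-μ) 0))
      = ∫ r in (0 : ℝ)..τ, Real.exp (-lam * (τ - r)) * (τ - r) ^ (ν - 1) *
        sSup ((fun σ => G (r + σ)) '' Set.Icc (-μ) 0) := by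
    apply intervalIntegral.integral_congr
    intro r hr
    rw [Set.uIcc_of_le (le_of_lt hτ)] at hr
    have him : ((fun σ => g (r + σ)) '' Set.Icc (-μ) 0)
        = ((fun σ => G (r + σ)) '' Set.Icc (-μ) 0) := by
      apply Set.image_congr
      rintro σ ⟨hσ1, hσ2⟩
      exact (hGeq (r + σ) ⟨by linarith [hr.1], by linarith [hr.2]⟩).symm
    beta_reduce
    rw [him]
  rw [h1, h2]
  exact aux_main lam ν μ τ hlam hν hμ hμτ G hGc hG0
end
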